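/- (Theorem 2.1(3)) Let (u₁,u₂,u₃,u₁*,u₂*,u₃*,k₁,k₂,k₁*,k₂*) be a closed dual timelike Frenet frame of period T, let φ, φ* ∈ ℝ, and let (v₁,v₂,v₃,v₁*,v₂*,v₃*) be the parallel frame with curvature data p, p*, q, q*. Then at every t with p(t) ≠ 0, the drall of the closed ruled surface generated by (v₁,v₁*) satisfies ⟨v₁'(t), v₁*'(t)⟩ / ⟨v₁'(t), v₁'(t)⟩ = p*(t)/p(t) = (k₁* cosh φ + k₂* sinh φ)/(k₁ cosh φ + k₂ sinh φ) + φ*·(k₁ sinh φ + k₂ cosh φ)/(k₁ cosh φ + k₂ sinh φ), with k₁, k₂, k₁*, k₂* evaluated at t. -/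

import Mathlib

noncomputable section

/-- The Lorentzian inner product on `ℝ³`: `⟨a,b⟩ = -a₁b₁ + a₂b₂ + a₃b₃`. -/
def lin (a b : Fin 3 → ℝ) : ℝ := -(a 0 * b 0) + a 1 * b 1 + a 2 * b 2

/-- A closed dual timelike Frenet frame of period `T > 0`: differentiable `T`-periodic
frame maps `u₁,u₂,u₃` with dual parts `u₁s,u₂s,u₃s`, continuous `T`-periodic curvature
data `k₁,k₂,k₁s,k₂s`, Lorentzian orthonormality (with `u₁` timelike), the dual unit
conditions `⟨uᵢ,uⱼ*⟩ + ⟨uᵢ*,uⱼ⟩ = 0`, and the (dual) Frenet equations. -/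
structure DualFrenetFrame (T : ℝ) where
  u₁ : ℝ → Fin 3 → ℝ
  u₂ : ℝ → Fin 3 → ℝ
  u₃ : ℝ → Fin 3 → ℝ
  u₁s : ℝ → Fin 3 → ℝ
  u₂s : ℝ → Fin 3 → ℝ
  u₃s : ℝ → Fin 3 → ℝ
  k₁ : ℝ → ℝ
  k₂ : ℝ → ℝ
  k₁s : ℝ → ℝ
  k₂s : ℝ → ℝ
  hT : 0 < T
  diff_u₁ : Differentiable ℝ u₁
  diff_u₂ : Differentiable ℝ u₂
  diff_u₃ : Differentiable ℝ u₃
  diff_u₁s : Differentiable ℝ u₁s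
  diff_u₂s : Differentiable ℝ u₂s
  diff_u₃s : Differentiable ℝ u₃s
  cont_k₁ : Continuous k₁
  cont_k₂ : Continuous k₂
  cont_k₁s : Continuous k₁s
  cont_k₂s : Continuous k₂s
  per_u₁ : Function.Periodic u₁ T
  per_u₂ : Function.Periodic u₂ T
  per_u₃ : Function.Periodic u₃ T
  per_u₁s : Function.Periodic u₁s T
  per_u₂s : Function.Periodic u₂s T
  per_u₃s : Function.Periodic u₃s T
  per_k₁ : Function.Periodic k₁ T
  per_k₂ : Function.Periodic k₂ T
  per_k₁s : Function.Periodic k₁s T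
  per_k₂s : Function.Periodic k₂s T
  h₁₁ : ∀ t, lin (u₁ t) (u₁ t) = -1
  h₂₂ : ∀ t, lin (u₂ t) (u₂ t) = 1
  h₃₃ : ∀ t, lin (u₃ t) (u₃ t) = 1
  h₁₂ : ∀ t, lin (u₁ t) (u₂ t) = 0
  h₁₃ : ∀ t, lin (u₁ t) (u₃ t) = 0
  h₂₃ : ∀ t, lin (u₂ t) (u₃ t) = 0
  hd₁₁ : ∀ t, lin (u₁ t) (u₁s t) + lin (u₁s t) (u₁ t) = 0
  hd₁₂ : ∀ t, lin (u₁ t) (u₂s t) + lin (u₁s t) (u₂ t) = 0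
  hd₁₃ : ∀ t, lin (u₁ t) (u₃s t) + lin (u₁s t) (u₃ t) = 0
  hd₂₁ : ∀ t, lin (u₂ t) (u₁s t) + lin (u₂s t) (u₁ t) = 0
  hd₂₂ : ∀ t, lin (u₂ t) (u₂s t) + lin (u₂s t) (u₂ t) = 0
  hd₂₃ : ∀ t, lin (u₂ t) (u₃s t) + lin (u₂s t) (u₃ t) = 0
  hd₃₁ : ∀ t, lin (u₃ t) (u₁s t) + lin (u₃s t) (u₁ t) = 0
  hd₃₂ : ∀ t, lin (u₃ t) (u₂s t) + lin (u₃s t) (u₂ t) = 0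
  hd₃₃ : ∀ t, lin (u₃ t) (u₃s t) + lin (u₃s t) (u₃ t) = 0
  frenet₁ : ∀ t, deriv u₁ t = k₁ t • u₂ t
  frenet₂ : ∀ t, deriv u₂ t = k₁ t • u₁ t - k₂ t • u₃ t
  frenet₃ : ∀ t, deriv u₃ t = k₂ t • u₂ t
  frenet₁s : ∀ t, deriv u₁s t = k₁s t • u₂ t + k₁ t • u₂s t
  frenet₂s : ∀ t, deriv u₂s t =
    k₁s t • u₁ t - k₂s t • u₃ t + k₁ t • u₁s t - k₂ t • u₃s t
  frenet₃s : ∀ t, deriv u₃s t = k₂s t • u₂ t + k₂ t • u₂s t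

/-- `∮ f = ∫₀ᵀ f(t) dt`. -/
def oint (T : ℝ) (f : ℝ → ℝ) : ℝ := ∫ t in (0:ℝ)..T, f t

/-- The real Steiner vector `d` at `t₀`. -/
def dvec {T : ℝ} (F : DualFrenetFrame T) (t₀ : ℝ) : Fin 3 → ℝ :=
  oint T F.k₂ • F.u₁ t₀ - oint T F.k₁ • F.u₃ t₀

/-- The dual Steiner vector `d*` at `t₀`. -/
def dvecs {T : ℝ} (F : DualFrenetFrame T) (t₀ : ℝ) : Fin 3 → ℝ :=
  oint T F.k₂ • F.u₁s t₀ + oint T F.k₂s • F.u₁ t₀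
    - oint T F.k₁ • F.u₃s t₀ - oint T F.k₁s • F.u₃ t₀

/-- Real part of the parallel frame vector `v₁ = cosh φ · u₁ + sinh φ · u₃`. -/
def pv₁ {T : ℝ} (F : DualFrenetFrame T) (φ : ℝ) : ℝ → Fin 3 → ℝ :=
  fun t => Real.cosh φ • F.u₁ t + Real.sinh φ • F.u₃ t

/-- Real part of the parallel frame vector `v₂ = u₂`. -/
def pv₂ {T : ℝ} (F : DualFrenetFrame T) : ℝ → Fin 3 → ℝ := F.u₂

/-- Real part of the parallel frame vector `v₃ = -sinh φ · u₁ - cosh φ · u₃`. -/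
def pv₃ {T : ℝ} (F : DualFrenetFrame T) (φ : ℝ) : ℝ → Fin 3 → ℝ :=
  fun t => -(Real.sinh φ • F.u₁ t) - Real.cosh φ • F.u₃ t

/-- Dual part `v₁*` of the parallel frame. -/
def pv₁s {T : ℝ} (F : DualFrenetFrame T) (φ φs : ℝ) : ℝ → Fin 3 → ℝ :=
  fun t => Real.cosh φ • F.u₁s t + Real.sinh φ • F.u₃s t
    + φs • (Real.sinh φ • F.u₁ t + Real.cosh φ • F.u₃ t)

/-- Dual part `v₂* = u₂*` of the parallel frame. -/
def pv₂s {T : ℝ} (F : DualFrenetFrame T) : ℝ → Fin 3 → ℝ := F.u₂s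

/-- Dual part `v₃*` of the parallel frame. -/
def pv₃s {T : ℝ} (F : DualFrenetFrame T) (φ φs : ℝ) : ℝ → Fin 3 → ℝ :=
  fun t => -(Real.sinh φ • F.u₁s t) - Real.cosh φ • F.u₃s t
    - φs • (Real.cosh φ • F.u₁ t + Real.sinh φ • F.u₃ t)

/-- Curvature `p = k₁ cosh φ + k₂ sinh φ` of the parallel frame. -/
def pp {T : ℝ} (F : DualFrenetFrame T) (φ : ℝ) : ℝ → ℝ :=
  fun t => F.k₁ t * Real.cosh φ + F.k₂ t * Real.sinh φ

/-- Dual curvature `p*` of the parallel frame. -/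
def pps {T : ℝ} (F : DualFrenetFrame T) (φ φs : ℝ) : ℝ → ℝ :=
  fun t => F.k₁s t * Real.cosh φ + F.k₂s t * Real.sinh φ
    + φs * (F.k₁ t * Real.sinh φ + F.k₂ t * Real.cosh φ)

/-- Torsion `q = -k₁ sinh φ - k₂ cosh φ` of the parallel frame. -/
def pq {T : ℝ} (F : DualFrenetFrame T) (φ : ℝ) : ℝ → ℝ :=
  fun t => -(F.k₁ t * Real.sinh φ) - F.k₂ t * Real.cosh φ

/-- Dual torsion `q*` of the parallel frame. -/
def pqs {T : ℝ} (F : DualFrenetFrame T) (φ φs : ℝ) : ℝ → ℝ :=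
  fun t => -(F.k₁s t * Real.sinh φ) - F.k₂s t * Real.cosh φ
    - φs * (F.k₁ t * Real.cosh φ + F.k₂ t * Real.sinh φ)

/-- Theorem 2.1(3): the drall of the ruled surface generated by `(v₁,v₁*)` is `p*/p`. -/
theorem drall_v₁ {T : ℝ} (F : DualFrenetFrame T) (φ φs : ℝ) (t : ℝ)
    (h : pp F φ t ≠ 0) :
    lin (deriv (pv₁ F φ) t) (deriv (pv₁s F φ φs) t)
        / lin (deriv (pv₁ F φ) t) (deriv (pv₁ F φ) t)
      = pps F φ φs t / pp F φ t ∧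
    pps F φ φs t / pp F φ t
      = (F.k₁s t * Real.cosh φ + F.k₂s t * Real.sinh φ)
          / (F.k₁ t * Real.cosh φ + F.k₂ t * Real.sinh φ)
        + φs * (F.k₁ t * Real.sinh φ + F.k₂ t * Real.cosh φ)
          / (F.k₁ t * Real.cosh φ + F.k₂ t * Real.sinh φ) := by
  -- derivative of pv₁
  have hd1 : deriv (pv₁ F φ) t = pp F φ t • F.u₂ t := by
    have h1 : DifferentiableAt ℝ (fun s => Real.cosh φ • F.u₁ s) t :=
      (F.diff_u₁ t).const_smul (Real.cosh φ)
    have h3 : DifferentiableAt ℝ (fun s => Real.sinh φ • F.u₃ s) t :=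
      (F.diff_u₃ t).const_smul (Real.sinh φ)
    have : deriv (pv₁ F φ) t
        = Real.cosh φ • deriv F.u₁ t + Real.sinh φ • deriv F.u₃ t := by
      unfold pv₁
      rw [deriv_fun_add h1 h3, deriv_fun_const_smul _ (F.diff_u₁ t),
        deriv_fun_const_smul _ (F.diff_u₃ t)]
    rw [this, F.frenet₁, F.frenet₃, pp]
    module
  have hd1s : deriv (pv₁s F φ φs) t
      = pps F φ φs t • F.u₂ t + pp F φ t • F.u₂s t := by
    have h1 : DifferentiableAt ℝ (fun s => Real.cosh φ • F.u₁s s) t :=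
      (F.diff_u₁s t).const_smul (Real.cosh φ)
    have h3 : DifferentiableAt ℝ (fun s => Real.sinh φ • F.u₃s s) t :=
      (F.diff_u₃s t).const_smul (Real.sinh φ)
    have h5 : DifferentiableAt ℝ
        (fun s => φs • (Real.sinh φ • F.u₁ s + Real.cosh φ • F.u₃ s)) t :=
      (((F.diff_u₁ t).fun_const_smul _).fun_add ((F.diff_u₃ t).fun_const_smul _)).fun_const_smul _
    have h6 : DifferentiableAt ℝ
        (fun s => Real.sinh φ • F.u₁ s + Real.cosh φ • F.u₃ s) t :=
      ((F.diff_u₁ t).fun_const_smul _).fun_add ((F.diff_u₃ t).fun_const_smul _)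
    have : deriv (pv₁s F φ φs) t
        = Real.cosh φ • deriv F.u₁s t + Real.sinh φ • deriv F.u₃s t
          + φs • (Real.sinh φ • deriv F.u₁ t + Real.cosh φ • deriv F.u₃ t) := by
      unfold pv₁s
      rw [deriv_fun_add (h1.fun_add h3) h5, deriv_fun_add h1 h3,
        deriv_fun_const_smul _ (F.diff_u₁s t), deriv_fun_const_smul _ (F.diff_u₃s t),
        deriv_fun_const_smul _ h6,
        deriv_fun_add ((F.diff_u₁ t).fun_const_smul _) ((F.diff_u₃ t).fun_const_smul _),
        deriv_fun_const_smul _ (F.diff_u₁ t), deriv_fun_const_smul _ (F.diff_u₃ t)]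
    rw [this, F.frenet₁s, F.frenet₃s, F.frenet₁, F.frenet₃, pps, pp]
    module
  have h22s : lin (F.u₂ t) (F.u₂s t) = 0 := by
    have := F.hd₂₂ t
    have hsym : lin (F.u₂ t) (F.u₂s t) = lin (F.u₂s t) (F.u₂ t) := by
      simp [lin]; ring
    linarith [hsym ▸ this]
  have h22 := F.h₂₂ t
  constructor
  · rw [hd1, hd1s]
    have hnum : lin (pp F φ t • F.u₂ t)
        (pps F φ φs t • F.u₂ t + pp F φ t • F.u₂s t)
        = pp F φ t * pps F φ φs t * lin (F.u₂ t) (F.u₂ t)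
          + pp F φ t * pp F φ t * lin (F.u₂ t) (F.u₂s t) := by
      simp [lin]; ring
    have hden : lin (pp F φ t • F.u₂ t) (pp F φ t • F.u₂ t)
        = pp F φ t * pp F φ t * lin (F.u₂ t) (F.u₂ t) := by
      simp [lin]; ring
    rw [hnum, hden, h22, h22s]
    field_simp
    ring
  · rw [← add_div]
    simp [pps, pp]
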